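/- Let X, Z ∈ ℝ^{d×r} with XᵀX invertible and max_i g_i(X) ≤ g_max. Then for every integer p ≥ 2, the p-th moment of the stochastic gradient satisfies E[(‖SG(X)‖_X*)^p] ≤ 2^{2p}·d^{2(p−1)}·g_max^{p/2}·‖XXᵀ−ZZᵀ‖_F^p. -/

import Mathlib

open Matrix BigOperators

noncomputable section

/-- Frobenius norm of a real matrix. -/
def frob {m n : ℕ} (A : Matrix (Fin m) (Fin n) ℝ) : ℝ :=
  Real.sqrt (∑ i, ∑ j, (A i j) ^ 2)

/-- Trace inner product `⟨A,B⟩ = tr(AᵀB)`. -/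
def mip {m n : ℕ} (A B : Matrix (Fin m) (Fin n) ℝ) : ℝ := (Aᵀ * B).trace

open Classical in
/-- Smallest eigenvalue of a Hermitian matrix (junk value 0 otherwise). -/
def lammin {n : ℕ} (M : Matrix (Fin n) (Fin n) ℝ) : ℝ :=
  if h : M.IsHermitian then ⨅ i, h.eigenvalues i else 0

/-- The positive semidefinite square root, as `Matrix.PosSemidef.sqrt` was defined in Mathlib
(Dec 2024). -/
def psdSqrtOld {n : ℕ} {A : Matrix (Fin n) (Fin n) ℝ} (hA : A.PosSemidef) :
    Matrix (Fin n) (Fin n) ℝ :=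
  hA.1.eigenvectorUnitary.1 * diagonal ((↑) ∘ (Real.sqrt ∘ hA.1.eigenvalues)) *
    (star hA.1.eigenvectorUnitary : Matrix (Fin n) (Fin n) ℝ)

/-- Local norm `‖V‖_X = ‖V (XᵀX)^{1/2}‖_F`. -/
def locNorm {d r : ℕ} (X V : Matrix (Fin d) (Fin r) ℝ) : ℝ :=
  frob (V * psdSqrtOld (Matrix.posSemidef_conjTranspose_mul_self X))

/-- Dual local norm `‖V‖_X* = ‖V (XᵀX)^{-1/2}‖_F`. -/
def dualNorm {d r : ℕ} (X V : Matrix (Fin d) (Fin r) ℝ) : ℝ :=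
  frob (V * (psdSqrtOld (Matrix.posSemidef_conjTranspose_mul_self X))⁻¹)

/-- Leverage score / coherence `g_k(X) = e_kᵀ X (XᵀX)⁻¹ Xᵀ e_k`. -/
def lev {d r : ℕ} (k : Fin d) (X : Matrix (Fin d) (Fin r) ℝ) : ℝ :=
  (X * (Xᴴ * X)⁻¹ * Xᴴ) k k

/-- Gradient of the leverage score `∇g_k(X)`. -/
def levGrad {d r : ℕ} (k : Fin d) (X : Matrix (Fin d) (Fin r) ℝ) :
    Matrix (Fin d) (Fin r) ℝ :=
  (2 : ℝ) • ((1 - X * (Xᴴ * X)⁻¹ * Xᴴ) * Matrix.single k k (1 : ℝ) * X * (Xᴴ * X)⁻¹)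

/-- Stochastic gradient sample `SG(X)` for the index pair `(i,j)`. -/
def SG {d r : ℕ} (X Z : Matrix (Fin d) (Fin r) ℝ) (i j : Fin d) :
    Matrix (Fin d) (Fin r) ℝ :=
  (2 * (d : ℝ) ^ 2 * ((X * Xᴴ - Z * Zᴴ) i j)) •
    ((Matrix.single i j (1 : ℝ) + Matrix.single j i (1 : ℝ)) * X)

/- ---------- auxiliary lemmas ---------- -/

lemma psdSqrtOld_isHermitian {n : ℕ} {A : Matrix (Fin n) (Fin n) ℝ} (hA : A.PosSemidef) :
    (psdSqrtOld hA).IsHermitian := by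
  unfold psdSqrtOld Matrix.IsHermitian
  rw [Matrix.conjTranspose_mul, Matrix.conjTranspose_mul, Matrix.diagonal_conjTranspose]
  simp [Matrix.star_eq_conjTranspose, Matrix.mul_assoc]

lemma psdSqrtOld_mul_self {n : ℕ} {A : Matrix (Fin n) (Fin n) ℝ} (hA : A.PosSemidef) :
    psdSqrtOld hA * psdSqrtOld hA = A := by
  unfold psdSqrtOld
  have hU : (star hA.1.eigenvectorUnitary : Matrix (Fin n) (Fin n) ℝ) *
      hA.1.eigenvectorUnitary.1 = 1 := Unitary.coe_star_mul_self _
  have hD : diagonal ((↑) ∘ (Real.sqrt ∘ hA.1.eigenvalues)) *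
      diagonal ((↑) ∘ (Real.sqrt ∘ hA.1.eigenvalues)) =
      diagonal (RCLike.ofReal ∘ hA.1.eigenvalues : Fin n → ℝ) := by
    rw [Matrix.diagonal_mul_diagonal]
    congr 1
    funext i
    simp [Real.mul_self_sqrt (hA.eigenvalues_nonneg i)]
  conv_rhs => rw [hA.1.spectral_theorem]
  rw [Unitary.conjStarAlgAut_apply]
  calc _ = hA.1.eigenvectorUnitary.1 * diagonal ((↑) ∘ (Real.sqrt ∘ hA.1.eigenvalues)) *
      ((star hA.1.eigenvectorUnitary : Matrix (Fin n) (Fin n) ℝ) * hA.1.eigenvectorUnitary.1) *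
      diagonal ((↑) ∘ (Real.sqrt ∘ hA.1.eigenvalues)) *
      (star hA.1.eigenvectorUnitary : Matrix (Fin n) (Fin n) ℝ) := by simp only [Matrix.mul_assoc]
    _ = _ := by rw [hU, Matrix.mul_one, Matrix.mul_assoc _ (diagonal _) (diagonal _), hD]


lemma frob_nonneg {m n : ℕ} (A : Matrix (Fin m) (Fin n) ℝ) : 0 ≤ frob A :=
  Real.sqrt_nonneg _

lemma frob_sq {m n : ℕ} (A : Matrix (Fin m) (Fin n) ℝ) :
    frob A ^ 2 = ∑ i, ∑ j, (A i j) ^ 2 :=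
  Real.sq_sqrt (by positivity)

lemma frob_smul {m n : ℕ} (c : ℝ) (A : Matrix (Fin m) (Fin n) ℝ) :
    frob (c • A) = |c| * frob A := by
  unfold frob
  have h : ∑ i, ∑ j, ((c • A) i j) ^ 2 = c ^ 2 * ∑ i, ∑ j, (A i j) ^ 2 := by
    simp [Finset.mul_sum, mul_pow, Matrix.smul_apply, smul_eq_mul]
  rw [h, Real.sqrt_mul (sq_nonneg c), Real.sqrt_sq_eq_abs]

lemma lev_eq {d r : ℕ} (k : Fin d) (X : Matrix (Fin d) (Fin r) ℝ) :
    lev k X = ∑ l, (X * (psdSqrtOld (Matrix.posSemidef_conjTranspose_mul_self X))⁻¹) k l ^ 2 := by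
  set S := psdSqrtOld (Matrix.posSemidef_conjTranspose_mul_self X) with hSdef
  have hSh : S.IsHermitian := psdSqrtOld_isHermitian _
  have h1 : (S⁻¹)ᴴ = S⁻¹ := by
    rw [Matrix.conjTranspose_nonsing_inv, hSh.eq]
  have h2 : S⁻¹ * S⁻¹ = (Xᴴ * X)⁻¹ := by
    rw [← Matrix.mul_inv_rev, psdSqrtOld_mul_self _]
  have hBB : (X * S⁻¹) * (X * S⁻¹)ᴴ = X * (Xᴴ * X)⁻¹ * Xᴴ := by
    rw [Matrix.conjTranspose_mul, h1, Matrix.mul_assoc, ← Matrix.mul_assoc S⁻¹ S⁻¹ Xᴴ, h2,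
      ← Matrix.mul_assoc]
  unfold lev
  rw [← hBB]
  simp only [Matrix.mul_apply, Matrix.conjTranspose_apply, sq, star_trivial]

lemma lev_nonneg {d r : ℕ} (k : Fin d) (X : Matrix (Fin d) (Fin r) ℝ) : 0 ≤ lev k X := by
  rw [lev_eq]
  positivity

lemma dualNorm_SG_le {d r : ℕ} (X Z : Matrix (Fin d) (Fin r) ℝ) (gmax : ℝ)
    (hg : ∀ i, lev i X ≤ gmax) (hg0 : 0 ≤ gmax) (i j : Fin d) :
    dualNorm X (SG X Z i j) ≤
      2 * (d : ℝ) ^ 2 * |(X * Xᴴ - Z * Zᴴ) i j| * (2 * Real.sqrt gmax) := by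
  set S := psdSqrtOld (Matrix.posSemidef_conjTranspose_mul_self X) with hSdef
  set B := X * S⁻¹ with hB
  set E := Matrix.single i j (1 : ℝ) + Matrix.single j i (1 : ℝ) with hEdef
  have hE : ∀ k l, (E * X * S⁻¹) k l
      = (if i = k then B j l else 0) + (if j = k then B i l else 0) := by
    intro k l
    rw [hEdef, Matrix.add_mul, Matrix.add_mul, Matrix.add_apply]
    congr 1
    · rw [Matrix.mul_assoc, ← hB]
      simp [Matrix.mul_apply, Matrix.single, ite_and]
    · rw [Matrix.mul_assoc, ← hB]
      simp [Matrix.mul_apply, Matrix.single, ite_and]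
  have step1 : ∀ k, ∑ l, ((E * X * S⁻¹) k l) ^ 2
      ≤ (if i = k then 2 * ∑ l, (B j l) ^ 2 else 0)
        + (if j = k then 2 * ∑ l, (B i l) ^ 2 else 0) := by
    intro k
    have hpt : ∀ l, ((E * X * S⁻¹) k l) ^ 2
        ≤ 2 * (if i = k then (B j l) ^ 2 else 0) + 2 * (if j = k then (B i l) ^ 2 else 0) := by
      intro l
      rw [hE]
      by_cases h1 : i = k <;> by_cases h2 : j = k <;> simp [h1, h2] <;>
        nlinarith [sq_nonneg (B j l - B i l), sq_nonneg (B j l + B i l),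
          sq_nonneg (B j l), sq_nonneg (B i l)]
    calc ∑ l, ((E * X * S⁻¹) k l) ^ 2
        ≤ ∑ l, (2 * (if i = k then (B j l) ^ 2 else 0)
            + 2 * (if j = k then (B i l) ^ 2 else 0)) :=
          Finset.sum_le_sum fun l _ => hpt l
      _ = (if i = k then 2 * ∑ l, (B j l) ^ 2 else 0)
          + (if j = k then 2 * ∑ l, (B i l) ^ 2 else 0) := by
          rw [Finset.sum_add_distrib]
          congr 1 <;> [by_cases h1 : i = k; by_cases h1 : j = k] <;>
            simp [h1, Finset.mul_sum]
  have hsum : ∑ k, ∑ l, ((E * X * S⁻¹) k l) ^ 2 ≤ 4 * gmax := by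
    have total : ∑ k, ∑ l, ((E * X * S⁻¹) k l) ^ 2 ≤ 2 * lev j X + 2 * lev i X := by
      calc ∑ k, ∑ l, ((E * X * S⁻¹) k l) ^ 2
          ≤ ∑ k, ((if i = k then 2 * ∑ l, (B j l) ^ 2 else 0)
              + (if j = k then 2 * ∑ l, (B i l) ^ 2 else 0)) :=
            Finset.sum_le_sum fun k _ => step1 k
        _ = 2 * ∑ l, (B j l) ^ 2 + 2 * ∑ l, (B i l) ^ 2 := by
            rw [Finset.sum_add_distrib, Finset.sum_ite_eq, Finset.sum_ite_eq]
            simp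
        _ = 2 * lev j X + 2 * lev i X := by
            rw [lev_eq j X, lev_eq i X]
    linarith [hg i, hg j, total]
  have hfb : frob (E * X * S⁻¹) ≤ 2 * Real.sqrt gmax := by
    unfold frob
    calc Real.sqrt (∑ k, ∑ l, ((E * X * S⁻¹) k l) ^ 2)
        ≤ Real.sqrt (4 * gmax) := Real.sqrt_le_sqrt hsum
      _ = 2 * Real.sqrt gmax := by
          rw [show (4 : ℝ) * gmax = 2 ^ 2 * gmax by norm_num,
            Real.sqrt_mul (by positivity), Real.sqrt_sq (by norm_num : (0:ℝ) ≤ 2)]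
  have heq : dualNorm X (SG X Z i j)
      = |2 * (d : ℝ) ^ 2 * ((X * Xᴴ - Z * Zᴴ) i j)| * frob (E * X * S⁻¹) := by
    unfold dualNorm SG
    rw [Matrix.smul_mul, frob_smul]
  rw [heq, abs_mul, abs_of_nonneg (show (0:ℝ) ≤ 2 * (d : ℝ) ^ 2 by positivity)]
  exact mul_le_mul_of_nonneg_left hfb (by positivity)

/-- `p`-th moment bound on the stochastic gradient in the dual local norm. -/
theorem SG_pth_moment {d r : ℕ} (X Z : Matrix (Fin d) (Fin r) ℝ) (gmax : ℝ)
    (hX : IsUnit (Xᴴ * X).det) (hg : ∀ i, lev i X ≤ gmax) :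
    ∀ p : ℕ, 2 ≤ p →
      ((d : ℝ) ^ 2)⁻¹ * ∑ i : Fin d, ∑ j : Fin d, dualNorm X (SG X Z i j) ^ p
        ≤ 2 ^ (2 * p) * (d : ℝ) ^ (2 * (p - 1)) * gmax ^ ((p : ℝ) / 2)
            * frob (X * Xᴴ - Z * Zᴴ) ^ p := by
  intro p hp
  rcases Nat.eq_zero_or_pos d with hd | hd
  · subst hd
    simp [zero_pow (show 2 * (p - 1) ≠ 0 by omega)]
  have hg0 : 0 ≤ gmax := le_trans (lev_nonneg ⟨0, hd⟩ X) (hg ⟨0, hd⟩)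
  set M := X * Xᴴ - Z * Zᴴ with hM
  have hMbd : ∀ i j : Fin d, |M i j| ≤ frob M := by
    intro i j
    have h : (M i j) ^ 2 ≤ ∑ a, ∑ b, (M a b) ^ 2 := by
      calc (M i j) ^ 2 ≤ ∑ b, (M i b) ^ 2 :=
            Finset.single_le_sum (f := fun b => (M i b) ^ 2) (fun b _ => sq_nonneg _)
              (Finset.mem_univ j)
        _ ≤ ∑ a, ∑ b, (M a b) ^ 2 :=
            Finset.single_le_sum (f := fun a => ∑ b, (M a b) ^ 2) (fun a _ => by positivity)
              (Finset.mem_univ i)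
    calc |M i j| = Real.sqrt ((M i j) ^ 2) := (Real.sqrt_sq_eq_abs _).symm
      _ ≤ frob M := Real.sqrt_le_sqrt h
  have hMsum : ∑ i : Fin d, ∑ j : Fin d, |M i j| ^ p ≤ frob M ^ p := by
    have key : ∀ i j : Fin d, |M i j| ^ p ≤ (M i j) ^ 2 * frob M ^ (p - 2) := by
      intro i j
      have h1 : |M i j| ^ p = |M i j| ^ 2 * |M i j| ^ (p - 2) := by
        rw [← pow_add]
        congr 1
        omega
      rw [h1, sq_abs]
      exact mul_le_mul_of_nonneg_left (pow_le_pow_left₀ (abs_nonneg _) (hMbd i j) _)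
        (sq_nonneg _)
    calc ∑ i : Fin d, ∑ j : Fin d, |M i j| ^ p
        ≤ ∑ i : Fin d, ∑ j : Fin d, (M i j) ^ 2 * frob M ^ (p - 2) :=
          Finset.sum_le_sum fun i _ => Finset.sum_le_sum fun j _ => key i j
      _ = (∑ i : Fin d, ∑ j : Fin d, (M i j) ^ 2) * frob M ^ (p - 2) := by
          simp [Finset.sum_mul]
      _ = frob M ^ 2 * frob M ^ (p - 2) := by rw [frob_sq]
      _ = frob M ^ p := by
          rw [← pow_add]
          congr 1
          omega
  have hterm : ∀ i j : Fin d, dualNorm X (SG X Z i j) ^ p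
      ≤ (4 * (d : ℝ) ^ 2 * Real.sqrt gmax) ^ p * |M i j| ^ p := by
    intro i j
    have h := dualNorm_SG_le X Z gmax hg hg0 i j
    have hnn : 0 ≤ dualNorm X (SG X Z i j) := by
      unfold dualNorm
      exact frob_nonneg _
    calc dualNorm X (SG X Z i j) ^ p
        ≤ (2 * (d : ℝ) ^ 2 * |M i j| * (2 * Real.sqrt gmax)) ^ p :=
          pow_le_pow_left₀ hnn h p
      _ = ((4 * (d : ℝ) ^ 2 * Real.sqrt gmax) * |M i j|) ^ p := by
          congr 1
          ring
      _ = (4 * (d : ℝ) ^ 2 * Real.sqrt gmax) ^ p * |M i j| ^ p := mul_pow _ _ p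
  have hsum : ∑ i : Fin d, ∑ j : Fin d, dualNorm X (SG X Z i j) ^ p
      ≤ (4 * (d : ℝ) ^ 2 * Real.sqrt gmax) ^ p * frob M ^ p := by
    calc ∑ i : Fin d, ∑ j : Fin d, dualNorm X (SG X Z i j) ^ p
        ≤ ∑ i : Fin d, ∑ j : Fin d, (4 * (d : ℝ) ^ 2 * Real.sqrt gmax) ^ p * |M i j| ^ p :=
          Finset.sum_le_sum fun i _ => Finset.sum_le_sum fun j _ => hterm i j
      _ = (4 * (d : ℝ) ^ 2 * Real.sqrt gmax) ^ p * ∑ i : Fin d, ∑ j : Fin d, |M i j| ^ p := by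
          simp [Finset.mul_sum]
      _ ≤ _ := mul_le_mul_of_nonneg_left hMsum (by positivity)
  have hgp : gmax ^ ((p : ℝ) / 2) = Real.sqrt gmax ^ p := by
    rw [show (p : ℝ) / 2 = (1 / 2) * (p : ℝ) by ring, Real.rpow_mul hg0, Real.rpow_natCast,
      Real.sqrt_eq_rpow]
  have hd0 : (d : ℝ) ≠ 0 := Nat.cast_ne_zero.mpr (by omega)
  have hdp : ((d : ℝ) ^ 2)⁻¹ * (d : ℝ) ^ (2 * p) = (d : ℝ) ^ (2 * (p - 1)) := by
    have h2p : 2 * p = 2 * (p - 1) + 2 := by omega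
    rw [h2p, pow_add]
    field_simp
  have hfinal : ((d : ℝ) ^ 2)⁻¹ * ((4 * (d : ℝ) ^ 2 * Real.sqrt gmax) ^ p * frob M ^ p)
      = 2 ^ (2 * p) * (d : ℝ) ^ (2 * (p - 1)) * gmax ^ ((p : ℝ) / 2) * frob M ^ p := by
    rw [mul_pow, mul_pow, hgp, show ((2 : ℝ)) ^ (2 * p) = 4 ^ p by rw [pow_mul]; norm_num,
      ← hdp, ← pow_mul]
    ring
  calc ((d : ℝ) ^ 2)⁻¹ * ∑ i : Fin d, ∑ j : Fin d, dualNorm X (SG X Z i j) ^ p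
      ≤ ((d : ℝ) ^ 2)⁻¹ * ((4 * (d : ℝ) ^ 2 * Real.sqrt gmax) ^ p * frob M ^ p) :=
        mul_le_mul_of_nonneg_left hsum (by positivity)
    _ = _ := hfinal
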